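/- Let E be a countable set and K a bounded self-adjoint operator on l²(E) with 0 ≤ K ≤ I (i.e. 0 ≤ ⟨f, K f⟩ ≤ ⟨f, f⟩ for all f ∈ l²(E)). Then there exists a unique probability measure μ on X = {0,1}^E (with the product σ-algebra) such that for every nonempty finite subset S = {x₁,…,xₙ} ⊆ E, μ({ξ ∈ X : S ⊆ ξ}) = det (K(xᵢ,xⱼ))_{1≤i,j≤n}, where K(x,y) := ⟨e_x, K e_y⟩. -/

import Mathlib

open MeasureTheory

/-- The standard basis vector `e_x` of `l²(E)`. -/
noncomputable def evec {E : Type*} [DecidableEq E] (x : E) : lp (fun _ : E => ℂ) 2 :=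
  lp.single 2 x 1

open scoped ComplexOrder
open Matrix

namespace DPP

/-- If all rows of `N` outside `P` are identity rows, the determinant of `N` equals the
determinant of its principal submatrix on `P`. -/
lemma det_eq_det_submatrix {ι : Type*} [Fintype ι] [DecidableEq ι]
    (N : Matrix ι ι ℂ) (P : ι → Prop) [DecidablePred P]
    (h : ∀ i, ¬ P i → ∀ j, N i j = if i = j then 1 else 0) :
    N.det = (N.submatrix ((↑) : {x // P x} → ι) ((↑) : {x // P x} → ι)).det := by
  classical
  rw [← Matrix.det_submatrix_equiv_self (Equiv.sumCompl P) N]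
  have hb : N.submatrix (Equiv.sumCompl P) (Equiv.sumCompl P) =
      Matrix.fromBlocks (N.submatrix (↑) (↑))
        (N.submatrix ((↑) : {x // P x} → ι) ((↑) : {x // ¬ P x} → ι)) 0 1 := by
    ext i j
    cases i with
    | inl i =>
      cases j with
      | inl j => rfl
      | inr j => rfl
    | inr i =>
      cases j with
      | inl j =>
        simp only [Matrix.submatrix_apply, Equiv.sumCompl_apply_inr, Equiv.sumCompl_apply_inl,
          Matrix.fromBlocks_apply₂₁, Matrix.zero_apply]
        rw [h i i.2 j]
        have : (i : ι) ≠ (j : ι) := fun hij => i.2 (hij ▸ j.2)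
        simp [this]
      | inr j =>
        simp only [Matrix.submatrix_apply, Equiv.sumCompl_apply_inr,
          Matrix.fromBlocks_apply₂₂]
        rw [h i i.2 j, Matrix.one_apply]
        by_cases hij : i = j
        · simp [hij]
        · have : (i : ι) ≠ (j : ι) := fun hc => hij (Subtype.ext hc)
          simp [this, hij]
  rw [hb, Matrix.det_fromBlocks_zero₂₁, Matrix.det_one, mul_one]

variable (M : ℕ → ℕ → ℂ)

/-- The matrix whose rows are `M`-rows where `s` is `true` and `(1-M)`-rows where `s` is
`false`. -/
noncomputable def Nmat (n : ℕ) (s : Fin n → Bool) : Matrix (Fin n) (Fin n) ℂ :=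
  Matrix.of fun i j => if s i then M i j else (if i = j then 1 else 0) - M i j

/-- Its determinant: the probability weight of a configuration string. -/
noncomputable def dt (n : ℕ) (s : Fin n → Bool) : ℂ := (Nmat M n s).det

lemma dt_zero (s : Fin 0 → Bool) : dt M 0 s = 1 := Matrix.det_fin_zero

lemma det_ident_last {n : ℕ} (A : Matrix (Fin (n+1)) (Fin (n+1)) ℂ)
    (h : ∀ j, A (Fin.last n) j = if Fin.last n = j then 1 else 0) :
    A.det = (A.submatrix Fin.castSucc Fin.castSucc).det := by
  rw [Matrix.det_succ_row A (Fin.last n)]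
  rw [Finset.sum_eq_single (Fin.last n)]
  · rw [h, Fin.succAbove_last]
    simp
  · intro j _ hj
    rw [h]
    simp [(Ne.symm hj : ¬ (Fin.last n = j))]
  · simp

/-- The basic recursion: splitting on the last coordinate. -/
lemma dt_succ (n : ℕ) (s : Fin n → Bool) :
    dt M (n+1) (Fin.snoc s false) + dt M (n+1) (Fin.snoc s true) = dt M n s := by
  classical
  set C : Matrix (Fin (n+1)) (Fin (n+1)) ℂ := Nmat M (n+1) (Fin.snoc s false) with hC
  have h1 : Nmat M (n+1) (Fin.snoc s false) =
      C.updateRow (Fin.last n) (fun j => (if Fin.last n = j then 1 else 0) - M n j) := by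
    ext i j
    by_cases hi : i = Fin.last n
    · subst hi
      simp [Matrix.updateRow_self, hC, Nmat, Fin.snoc_last, Fin.val_last]
    · simp [Matrix.updateRow_ne hi, hC]
  have h2 : Nmat M (n+1) (Fin.snoc s true) =
      C.updateRow (Fin.last n) (fun j => M n j) := by
    ext i j
    by_cases hi : i = Fin.last n
    · subst hi
      simp [Matrix.updateRow_self, hC, Nmat, Fin.snoc_last, Fin.val_last]
    · rcases Fin.eq_castSucc_of_ne_last hi with ⟨i', rfl⟩
      simp [Matrix.updateRow_ne hi, hC, Nmat, Fin.snoc_castSucc]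
  have key : dt M (n+1) (Fin.snoc s false) + dt M (n+1) (Fin.snoc s true) =
      (C.updateRow (Fin.last n) (fun j => if Fin.last n = j then 1 else 0)).det := by
    rw [dt, dt, h1, h2]
    have : (fun j => if Fin.last n = j then (1:ℂ) else 0) =
        (fun j : Fin (n+1) => ((if Fin.last n = j then 1 else 0) - M n ↑j))
          + (fun j : Fin (n+1) => M n ↑j) := by
      funext j; simp
    rw [this, Matrix.det_updateRow_add]
  rw [key, det_ident_last _ (by intro j; simp [Matrix.updateRow_self])]
  congr 1
  ext i j
  have hi : (Fin.castSucc i) ≠ Fin.last n := (Fin.castSucc_lt_last i).ne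
  rw [Matrix.submatrix_apply, Matrix.updateRow_ne hi]
  simp [hC, Nmat, Fin.snoc_castSucc, Fin.castSucc_inj]


/-- Correlation identity: summing the weights of all configurations containing `S`. -/
lemma sum_dt (n : ℕ) (S : Finset ℕ) :
    ∑ s ∈ Fintype.piFinset (fun i : Fin n =>
        if (i : ℕ) ∈ S then ({true} : Finset Bool) else Finset.univ), dt M n s =
    (Matrix.of fun i j : {i : Fin n // (i : ℕ) ∈ S} =>
      M ((i : Fin n) : ℕ) ((j : Fin n) : ℕ)).det := by
  classical
  set g : (i : Fin n) → Bool → (Fin n → ℂ) :=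
    fun i b j => if b then M i j else (if i = j then 1 else 0) - M i j with hg
  set A : Fin n → Finset Bool := fun i => if (i:ℕ) ∈ S then {true} else Finset.univ with hA
  have hml := (Matrix.detRowAlternating (R := ℂ) (n := Fin n)).toMultilinearMap.map_sum_finset g A
  have hR : ∀ r : Fin n → Bool,
      (Matrix.detRowAlternating (R := ℂ) (n := Fin n)).toMultilinearMap (fun i => g i (r i)) =
      dt M n r := by
    intro r
    rfl
  have hrhs : ∑ r ∈ Fintype.piFinset A,
      (Matrix.detRowAlternating (R := ℂ) (n := Fin n)).toMultilinearMap (fun i => g i (r i)) =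
      ∑ r ∈ Fintype.piFinset A, dt M n r := by
    exact Finset.sum_congr rfl fun r _ => hR r
  set D : Matrix (Fin n) (Fin n) ℂ :=
    Matrix.of fun i j => if (i:ℕ) ∈ S then M i j else (if i = j then 1 else 0) with hD
  have hlhs : (fun i => ∑ b ∈ A i, g i b) = fun i j => D i j := by
    funext i j
    rw [Finset.sum_apply]
    by_cases hi : (i:ℕ) ∈ S
    · simp [hA, hg, hD, hi]
    · simp only [hA, hi, if_false]
      rw [Fintype.sum_bool]
      simp [hg, hD, hi]
  have hDdet : (Matrix.detRowAlternating (R := ℂ) (n := Fin n)).toMultilinearMap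
      (fun i => ∑ b ∈ A i, g i b) = D.det := by
    rw [hlhs]; rfl
  have hsub := det_eq_det_submatrix D (fun i => (i:ℕ) ∈ S) (by
    intro i hi j
    simp [hD, hi])
  have hfinal : (D.submatrix ((↑) : {x : Fin n // (x:ℕ) ∈ S} → Fin n)
      ((↑) : {x : Fin n // (x:ℕ) ∈ S} → Fin n)).det =
      (Matrix.of fun i j : {i : Fin n // (i : ℕ) ∈ S} =>
        M ((i : Fin n) : ℕ) ((j : Fin n) : ℕ)).det := by
    congr 1
    ext i j
    simp [hD, i.2]
  rw [hDdet, hrhs] at hml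
  rw [← hfinal, ← hsub, ← hml]

lemma psd_det_nonneg {m : Type*} [Fintype m] [DecidableEq m] {A : Matrix m m ℂ}
    (hA : A.PosSemidef) : 0 ≤ A.det := by
  rw [hA.1.det_eq_prod_eigenvalues]
  exact Finset.prod_nonneg fun i _ => by
    rw [RCLike.ofReal_nonneg]
    exact hA.eigenvalues_nonneg i

open scoped MatrixOrder in
lemma posdef_det_nonneg {n : ℕ} (A : Matrix (Fin n) (Fin n) ℂ) (hA : A.PosDef)
    (hA' : ((1 : Matrix (Fin n) (Fin n) ℂ) - A).PosDef) (s : Fin n → Bool) :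
    0 ≤ (Matrix.of fun i j => if s i then A i j else ((1 : Matrix (Fin n) (Fin n) ℂ) - A) i j).det := by
  classical
  set C : Matrix (Fin n) (Fin n) ℂ := 1 - A with hCdef
  have hdet : IsUnit C.det := isUnit_iff_ne_zero.2 hA'.det_pos.ne'
  have h1 : C * C⁻¹ = 1 := Matrix.mul_nonsing_inv _ hdet
  have h2 : C⁻¹ * C = 1 := Matrix.nonsing_inv_mul _ hdet
  set B : Matrix (Fin n) (Fin n) ℂ := CFC.sqrt A with hBdef
  have hB2 : B * B = A := CFC.sqrt_mul_sqrt_self A hA.posSemidef.nonneg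
  have hBH : Bᴴ = B := (CFC.sqrt_nonneg A).posSemidef.1
  have hcomm : B * C = C * B := by
    rw [hCdef, mul_sub, sub_mul, mul_one, one_mul, ← hB2, ← mul_assoc, mul_assoc]
  have hcomm' : B * C⁻¹ = C⁻¹ * B := by
    have hx : C * (B * C⁻¹) = B := by
      rw [← mul_assoc, ← hcomm, mul_assoc, h1, mul_one]
    calc B * C⁻¹ = (C⁻¹ * C) * (B * C⁻¹) := by rw [h2, one_mul]
      _ = C⁻¹ * (C * (B * C⁻¹)) := by rw [mul_assoc]
      _ = C⁻¹ * B := by rw [hx]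
  set R : Matrix (Fin n) (Fin n) ℂ := A * C⁻¹ with hRdef
  have hR : R = Bᴴ * C⁻¹ * B := by
    rw [hBH, hRdef, ← hB2]
    calc B * B * C⁻¹ = B * (B * C⁻¹) := by rw [mul_assoc]
      _ = B * (C⁻¹ * B) := by rw [hcomm']
      _ = B * C⁻¹ * B := by rw [← mul_assoc]
  have hRpsd : R.PosSemidef := by
    rw [hR]
    exact (hA'.inv.posSemidef).conjTranspose_mul_mul_same B
  have hRC : R * C = A := by rw [hRdef, mul_assoc, h2, mul_one]
  set T : Matrix (Fin n) (Fin n) ℂ :=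
    Matrix.of fun i j => if s i then R i j else (1 : Matrix (Fin n) (Fin n) ℂ) i j with hTdef
  have hTC : T * C = Matrix.of fun i j => if s i then A i j else C i j := by
    ext i j
    by_cases hsi : s i
    · rw [Matrix.mul_apply]
      simp only [hTdef, Matrix.of_apply, hsi, if_true]
      rw [← Matrix.mul_apply, hRC]
    · rw [Matrix.mul_apply]
      simp only [hTdef, Matrix.of_apply, hsi, Bool.false_eq_true, if_false]
      rw [← Matrix.mul_apply, one_mul]
  have hTdet : T.det = ((T.submatrix ((↑) : {i : Fin n // s i = true} → Fin n)
      ((↑) : {i : Fin n // s i = true} → Fin n))).det :=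
    det_eq_det_submatrix T (fun i => s i = true) (by
      intro i hi j
      simp only [hTdef, Matrix.of_apply, Matrix.one_apply]
      simp [hi])
  have hTnonneg : 0 ≤ T.det := by
    rw [hTdet]
    have : (T.submatrix ((↑) : {i : Fin n // s i = true} → Fin n)
        ((↑) : {i : Fin n // s i = true} → Fin n)) =
        R.submatrix ((↑) : {i : Fin n // s i = true} → Fin n)
        ((↑) : {i : Fin n // s i = true} → Fin n) := by
      ext i j
      simp [hTdef, i.2]
    rw [this]
    exact psd_det_nonneg (hRpsd.submatrix _)
  calc (0:ℂ) ≤ T.det * C.det := mul_nonneg hTnonneg hA'.det_pos.le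
    _ = (T * C).det := (Matrix.det_mul _ _).symm
    _ = _ := by rw [hTC]


lemma psd_smul {n : ℕ} {A : Matrix (Fin n) (Fin n) ℂ} (hA : A.PosSemidef) {c : ℝ}
    (hc : 0 ≤ c) : ((c : ℂ) • A).PosSemidef := by
  refine Matrix.PosSemidef.of_dotProduct_mulVec_nonneg ?_ ?_
  · rw [Matrix.IsHermitian, Matrix.conjTranspose_smul, Complex.star_def, Complex.conj_ofReal,
      hA.1.eq]
  · intro x
    rw [Matrix.smul_mulVec, dotProduct_smul, smul_eq_mul]
    exact mul_nonneg (Complex.zero_le_real.2 hc) (hA.dotProduct_mulVec_nonneg x)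

lemma posdef_smul_one {n : ℕ} {c : ℝ} (hc : 0 < c) :
    ((c : ℂ) • (1 : Matrix (Fin n) (Fin n) ℂ)).PosDef := by
  refine Matrix.PosDef.of_dotProduct_mulVec_pos ?_ ?_
  · rw [Matrix.IsHermitian, Matrix.conjTranspose_smul, Complex.star_def, Complex.conj_ofReal,
      Matrix.conjTranspose_one]
  · intro x hx
    rw [Matrix.smul_mulVec, dotProduct_smul, smul_eq_mul]
    exact mul_pos (Complex.zero_lt_real.2 hc) (Matrix.PosDef.one.dotProduct_mulVec_pos hx)

/-- Nonnegativity (in the complex order) of the configuration weights. -/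
lemma dt_nonneg
    (h1 : ∀ n : ℕ, (Matrix.of fun i j : Fin n => M i j).PosSemidef)
    (h2 : ∀ n : ℕ, ((1 : Matrix (Fin n) (Fin n) ℂ) -
      Matrix.of fun i j : Fin n => M i j).PosSemidef)
    (n : ℕ) (s : Fin n → Bool) : 0 ≤ dt M n s := by
  classical
  set A0 : Matrix (Fin n) (Fin n) ℂ := Matrix.of fun i j : Fin n => M i j with hA0
  set Am : ℝ → Matrix (Fin n) (Fin n) ℂ :=
    fun e => ((1 - e : ℝ) : ℂ) • A0 + ((e/2 : ℝ) : ℂ) • 1 with hAm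
  have hAme : ∀ (e : ℝ) (i j : Fin n), Am e i j =
      ((1 - e : ℝ) : ℂ) * A0 i j + ((e/2 : ℝ) : ℂ) * (if i = j then 1 else 0) := by
    intro e i j
    rw [hAm]
    simp [Matrix.one_apply]
  have hsplit : ∀ e : ℝ, (1 : Matrix (Fin n) (Fin n) ℂ) - Am e =
      ((1 - e : ℝ) : ℂ) • (1 - A0) + ((e/2 : ℝ) : ℂ) • 1 := by
    intro e
    ext i j
    rw [Matrix.sub_apply, hAme, Matrix.add_apply, Matrix.smul_apply, Matrix.smul_apply,
      Matrix.sub_apply, Matrix.one_apply, smul_eq_mul, smul_eq_mul]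
    push_cast
    ring
  have hposdef : ∀ e ∈ Set.Ioo (0:ℝ) 1, (Am e).PosDef ∧
      ((1 : Matrix (Fin n) (Fin n) ℂ) - Am e).PosDef := by
    intro e he
    have he1 : (0:ℝ) ≤ 1 - e := by linarith [he.2]
    have he2 : (0:ℝ) < e/2 := by linarith [he.1]
    constructor
    · exact Matrix.PosDef.posSemidef_add (psd_smul (h1 n) he1) (posdef_smul_one he2)
    · rw [hsplit]
      exact Matrix.PosDef.posSemidef_add (psd_smul (h2 n) he1) (posdef_smul_one he2)
  set f : ℝ → ℂ := fun e => (Matrix.of fun i j : Fin n =>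
    if s i then Am e i j else ((1 : Matrix (Fin n) (Fin n) ℂ) - Am e) i j).det with hf
  have hfnonneg : ∀ e ∈ Set.Ioo (0:ℝ) 1, 0 ≤ f e := fun e he =>
    posdef_det_nonneg (Am e) (hposdef e he).1 (hposdef e he).2 s
  have hmat : (Matrix.of fun i j : Fin n =>
      if s i then Am 0 i j else ((1 : Matrix (Fin n) (Fin n) ℂ) - Am 0) i j) = Nmat M n s := by
    ext i j
    simp only [Matrix.of_apply, Nmat]
    by_cases hsi : s i
    · rw [if_pos hsi, if_pos hsi, hAme]
      norm_num [hA0]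
    · rw [if_neg hsi, if_neg hsi, Matrix.sub_apply, hAme, Matrix.one_apply]
      norm_num [hA0]
  have hf0 : f 0 = dt M n s := by
    rw [hf]
    show (Matrix.of fun i j : Fin n =>
      if s i then Am 0 i j else ((1 : Matrix (Fin n) (Fin n) ℂ) - Am 0) i j).det = dt M n s
    rw [hmat, dt]
  have hfc : Continuous f := by
    apply Continuous.matrix_det
    apply continuous_matrix
    intro i j
    simp only [Matrix.of_apply]
    have hc1 : Continuous fun e : ℝ => ((1 - e : ℝ) : ℂ) :=
      Complex.continuous_ofReal.comp (continuous_const.sub continuous_id)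
    have hc2 : Continuous fun e : ℝ => ((e/2 : ℝ) : ℂ) :=
      Complex.continuous_ofReal.comp (continuous_id.div_const 2)
    have hAc : ∀ a b : ℂ, Continuous fun e : ℝ =>
        ((1 - e : ℝ) : ℂ) * a + ((e/2 : ℝ) : ℂ) * b :=
      fun a b => (hc1.mul continuous_const).add (hc2.mul continuous_const)
    by_cases hsi : s i
    · simp only [hsi, if_true]
      have : (fun e : ℝ => Am e i j) = fun e =>
          ((1 - e : ℝ) : ℂ) * A0 i j + ((e/2 : ℝ) : ℂ) * (if i = j then 1 else 0) := by
        funext e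
        exact hAme e i j
      rw [this]
      exact hAc _ _
    · simp only [hsi, Bool.false_eq_true, if_false]
      have : (fun e : ℝ => ((1 : Matrix (Fin n) (Fin n) ℂ) - Am e) i j) = fun e =>
          (if i = j then 1 else 0) -
            (((1 - e : ℝ) : ℂ) * A0 i j + ((e/2 : ℝ) : ℂ) * (if i = j then 1 else 0)) := by
        funext e
        rw [Matrix.sub_apply, hAme, Matrix.one_apply]
      rw [this]
      exact continuous_const.sub (hAc _ _)
  have htend : Filter.Tendsto f (nhdsWithin 0 (Set.Ioi 0)) (nhds (dt M n s)) := by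
    rw [← hf0]
    exact (hfc.tendsto 0).mono_left nhdsWithin_le_nhds
  have hclosed : IsClosed {z : ℂ | 0 ≤ z} := by
    have : {z : ℂ | 0 ≤ z} = Complex.re ⁻¹' (Set.Ici 0) ∩ Complex.im ⁻¹' {0} := by
      ext z
      simp only [Set.mem_setOf_eq, Set.mem_inter_iff, Set.mem_preimage, Set.mem_Ici,
        Set.mem_singleton_iff, Complex.nonneg_iff]
      exact ⟨fun h => ⟨h.1, h.2.symm⟩, fun h => ⟨h.1, h.2.symm⟩⟩
    rw [this]
    exact (isClosed_Ici.preimage Complex.continuous_re).inter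
      (isClosed_singleton.preimage Complex.continuous_im)
  refine hclosed.mem_of_tendsto htend ?_
  filter_upwards [Ioo_mem_nhdsGT_of_mem (Set.left_mem_Ico.2 one_pos)] with e he
  exact hfnonneg e he

/-- The real weight of a configuration. -/
noncomputable def wt (n : ℕ) (s : Fin n → Bool) : ℝ := (dt M n s).re

section hyp

variable (h1 : ∀ n : ℕ, (Matrix.of fun i j : Fin n => M i j).PosSemidef)
  (h2 : ∀ n : ℕ, ((1 : Matrix (Fin n) (Fin n) ℂ) -
      Matrix.of fun i j : Fin n => M i j).PosSemidef)

include h1 h2 in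
lemma wt_nonneg (n : ℕ) (s : Fin n → Bool) : 0 ≤ wt M n s :=
  (Complex.nonneg_iff.1 (dt_nonneg M h1 h2 n s)).1

include h1 h2 in
lemma dt_eq_wt (n : ℕ) (s : Fin n → Bool) : dt M n s = ((wt M n s : ℝ) : ℂ) := by
  have h := Complex.nonneg_iff.1 (dt_nonneg M h1 h2 n s)
  apply Complex.ext
  · simp [wt]
  · simp [← h.2]

lemma wt_zero (s : Fin 0 → Bool) : wt M 0 s = 1 := by
  rw [wt, dt_zero]
  simp

lemma wt_rec (n : ℕ) (s : Fin n → Bool) :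
    wt M n s = wt M (n+1) (Fin.snoc s false) + wt M (n+1) (Fin.snoc s true) := by
  rw [wt, wt, wt, ← Complex.add_re, dt_succ]

/-- Cumulative distribution: the left endpoint of the interval of a configuration. -/
noncomputable def acum : (n : ℕ) → (Fin n → Bool) → ℝ
  | 0, _ => 0
  | n+1, s => acum n (Fin.init s) +
      (if s (Fin.last n) then wt M (n+1) (Fin.snoc (Fin.init s) false) else 0)

/-- The configuration string associated to a real number. -/
noncomputable def sig : (n : ℕ) → ℝ → (Fin n → Bool)
  | 0, _ => Fin.elim0
  | n+1, t => Fin.snoc (sig n t)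
      (decide (acum M n (sig n t) + wt M (n+1) (Fin.snoc (sig n t) false) ≤ t))

lemma acum_snoc (n : ℕ) (u : Fin n → Bool) (c : Bool) :
    acum M (n+1) (Fin.snoc u c) = acum M n u +
      (if c then wt M (n+1) (Fin.snoc u false) else 0) := by
  rw [acum]
  simp [Fin.init_snoc, Fin.snoc_last]

lemma sig_succ (n : ℕ) (t : ℝ) :
    sig M (n+1) t = Fin.snoc (sig M n t)
      (decide (acum M n (sig M n t) + wt M (n+1) (Fin.snoc (sig M n t) false) ≤ t)) := by
  rw [sig]

lemma snoc_eq_iff {n : ℕ} {u : Fin n → Bool} {b : Bool} {s : Fin (n+1) → Bool} :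
    Fin.snoc u b = s ↔ u = Fin.init s ∧ b = s (Fin.last n) := by
  constructor
  · rintro rfl
    exact ⟨by simp, by simp⟩
  · rintro ⟨rfl, rfl⟩
    exact Fin.snoc_init_self s

include h1 h2 in
lemma interval_sub (n : ℕ) (u : Fin n → Bool) (c : Bool) :
    acum M n u ≤ acum M (n+1) (Fin.snoc u c) ∧
    acum M (n+1) (Fin.snoc u c) + wt M (n+1) (Fin.snoc u c) ≤ acum M n u + wt M n u := by
  have hrec := wt_rec M n u
  have hf := wt_nonneg M h1 h2 (n+1) (Fin.snoc u false)
  have ht := wt_nonneg M h1 h2 (n+1) (Fin.snoc u true)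
  rw [acum_snoc]
  cases c
  · simp only [Bool.false_eq_true, if_false]
    constructor
    · linarith
    · linarith
  · simp only [if_true]
    constructor
    · linarith
    · linarith

include h1 h2 in
lemma acum_bounds (n : ℕ) (s : Fin n → Bool) :
    0 ≤ acum M n s ∧ acum M n s + wt M n s ≤ 1 := by
  induction n with
  | zero =>
    rw [acum, wt_zero]
    norm_num
  | succ n ih =>
    have hs : Fin.snoc (Fin.init s) (s (Fin.last n)) = s := Fin.snoc_init_self s
    have hsub := interval_sub M h1 h2 n (Fin.init s) (s (Fin.last n))
    rw [hs] at hsub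
    have hi := ih (Fin.init s)
    exact ⟨le_trans hi.1 hsub.1, le_trans hsub.2 hi.2⟩

include h1 h2 in
lemma sig_iff (n : ℕ) (t : ℝ) (ht : t ∈ Set.Ico (0:ℝ) 1) (s : Fin n → Bool) :
    sig M n t = s ↔ acum M n s ≤ t ∧ t < acum M n s + wt M n s := by
  induction n with
  | zero =>
    have hsig : sig M 0 t = s := funext fun i => i.elim0
    rw [acum, wt_zero]
    simp only [hsig, true_iff]
    exact ⟨by simpa using ht.1, by simpa using ht.2⟩
  | succ n ih =>
    set u := sig M n t with hu
    have hut : acum M n u ≤ t ∧ t < acum M n u + wt M n u := (ih u).1 rfl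
    set b := decide (acum M n u + wt M (n+1) (Fin.snoc u false) ≤ t) with hb
    have hsig : sig M (n+1) t = Fin.snoc u b := sig_succ M n t
    rw [hsig]
    constructor
    · intro heq
      rcases snoc_eq_iff.1 heq with ⟨huinit, hblast⟩
      rw [← Fin.snoc_init_self s, ← huinit, ← hblast, acum_snoc]
      by_cases hth : acum M n u + wt M (n+1) (Fin.snoc u false) ≤ t
      · have hbt : b = true := by rw [hb, decide_eq_true_eq]; exact hth
        rw [hbt]
        simp only [if_true]
        constructor
        · exact hth
        · have := hut.2
          have hrec := wt_rec M n u
          linarith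
      · have hbt : b = false := by rw [hb]; simpa using hth
        rw [hbt]
        simp only [Bool.false_eq_true, if_false, add_zero]
        exact ⟨hut.1, by linarith [not_le.1 hth]⟩
    · intro hint
      have hs : Fin.snoc (Fin.init s) (s (Fin.last n)) = s := Fin.snoc_init_self s
      have hsub := interval_sub M h1 h2 n (Fin.init s) (s (Fin.last n))
      rw [hs] at hsub
      have hvint : acum M n (Fin.init s) ≤ t ∧ t < acum M n (Fin.init s) + wt M n (Fin.init s) :=
        ⟨le_trans hsub.1 hint.1, lt_of_lt_of_le hint.2 hsub.2⟩
      have huv : u = Fin.init s := (ih (Fin.init s)).2 hvint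
      have hbc : b = s (Fin.last n) := by
        rw [← hs, acum_snoc] at hint
        cases hc : s (Fin.last n)
        · rw [hc] at hint
          simp only [Bool.false_eq_true, if_false, add_zero] at hint
          rw [hb, huv]
          simpa using hint.2
        · rw [hc] at hint
          simp only [if_true] at hint
          rw [hb, huv, decide_eq_true_eq]
          exact hint.1
      rw [huv, hbc, hs]

include h1 h2 in
lemma sig_set_eq (n : ℕ) (s : Fin n → Bool) :
    {t : ℝ | t ∈ Set.Ico (0:ℝ) 1 ∧ sig M n t = s} =
      Set.Ico (acum M n s) (acum M n s + wt M n s) := by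
  ext t
  simp only [Set.mem_setOf_eq, Set.mem_Ico]
  constructor
  · rintro ⟨ht, heq⟩
    exact (sig_iff M h1 h2 n t ht s).1 heq
  · intro hint
    have hb := acum_bounds M h1 h2 n s
    have ht : t ∈ Set.Ico (0:ℝ) 1 := ⟨le_trans hb.1 hint.1, lt_of_lt_of_le hint.2 hb.2⟩
    exact ⟨ht, (sig_iff M h1 h2 n t ht s).2 hint⟩

lemma sig_measurable (n : ℕ) (s : Fin n → Bool) :
    MeasurableSet {t : ℝ | sig M n t = s} := by
  induction n with
  | zero =>
    have : {t : ℝ | sig M 0 t = s} = Set.univ :=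
      Set.eq_univ_of_forall fun t => funext fun i => i.elim0
    rw [this]
    exact MeasurableSet.univ
  | succ n ih =>
    set c : ℝ := acum M n (Fin.init s) + wt M (n+1) (Fin.snoc (Fin.init s) false) with hc
    have hset : {t : ℝ | sig M (n+1) t = s} =
        {t : ℝ | sig M n t = Fin.init s} ∩
          {t : ℝ | decide (c ≤ t) = s (Fin.last n)} := by
      ext t
      simp only [Set.mem_setOf_eq, Set.mem_inter_iff]
      rw [sig_succ, snoc_eq_iff]
      constructor
      · rintro ⟨h1', h2'⟩
        exact ⟨h1', by rw [← h2', hc, h1']⟩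
      · rintro ⟨h1', h2'⟩
        exact ⟨h1', by rw [← h2', hc, h1']⟩
    rw [hset]
    apply (ih (Fin.init s)).inter
    rcases Bool.eq_false_or_eq_true (s (Fin.last n)) with hlast | hlast
    · have hthis : {t : ℝ | decide (c ≤ t) = s (Fin.last n)} = Set.Ici c := by
        ext t
        simp [hlast]
      rw [hthis]
      exact measurableSet_Ici
    · have hthis : {t : ℝ | decide (c ≤ t) = s (Fin.last n)} = Set.Iio c := by
        ext t
        simp [hlast]
      rw [hthis]
      exact measurableSet_Iio

/-- The random configuration. -/
noncomputable def phi (t : ℝ) (k : ℕ) : Bool := sig M (k+1) t (Fin.last k)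

lemma sig_phi (n : ℕ) (t : ℝ) (k : Fin n) : sig M n t k = phi M t (k : ℕ) := by
  induction n with
  | zero => exact k.elim0
  | succ n ih =>
    rcases Fin.eq_castSucc_or_eq_last k with ⟨j, rfl⟩ | rfl
    · rw [sig_succ, Fin.snoc_castSucc, ih j]
      rfl
    · rfl

include h1 h2 in
/-- Existence of the determinantal measure on `ℕ → Bool`. -/
theorem core :
    ∃ μ : MeasureTheory.Measure (ℕ → Bool), MeasureTheory.IsProbabilityMeasure μ ∧
      ∀ (n : ℕ) (S : Finset ℕ), (∀ x ∈ S, x < n) →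
        ((μ {ξ : ℕ → Bool | ∀ x ∈ S, ξ x = true}).toReal : ℂ) =
          (Matrix.of fun i j : {i : Fin n // (i : ℕ) ∈ S} =>
            M ((i : Fin n) : ℕ) ((j : Fin n) : ℕ)).det := by
  classical
  have hphi_meas : Measurable (phi M) := by
    apply measurable_pi_lambda
    intro k
    apply measurable_to_countable'
    intro b
    have hpre : (fun t => phi M t k) ⁻¹' {b} =
        ⋃ (s : Fin (k+1) → Bool) (_ : s (Fin.last k) = b), {t : ℝ | sig M (k+1) t = s} := by
      ext t
      simp only [Set.mem_preimage, Set.mem_singleton_iff, Set.mem_iUnion, Set.mem_setOf_eq]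
      constructor
      · intro h
        exact ⟨sig M (k+1) t, h, rfl⟩
      · rintro ⟨s, hs, rfl⟩
        exact hs
    rw [hpre]
    exact MeasurableSet.iUnion fun s => MeasurableSet.iUnion fun _ => sig_measurable M (k+1) s
  set P : MeasureTheory.Measure ℝ :=
    MeasureTheory.volume.restrict (Set.Ico (0:ℝ) 1) with hP
  have hPprob : MeasureTheory.IsProbabilityMeasure P := by
    constructor
    rw [hP, MeasureTheory.Measure.restrict_apply_univ, Real.volume_Ico]
    norm_num
  refine ⟨P.map (phi M), MeasureTheory.Measure.isProbabilityMeasure_map hphi_meas.aemeasurable, ?_⟩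
  intro n S hS
  have hcyl : MeasurableSet {ξ : ℕ → Bool | ∀ x ∈ S, ξ x = true} := by
    have : {ξ : ℕ → Bool | ∀ x ∈ S, ξ x = true} =
        ⋂ x ∈ (S : Set ℕ), (fun ξ : ℕ → Bool => ξ x) ⁻¹' {true} := by
      ext ξ
      simp
    rw [this]
    exact MeasurableSet.biInter S.countable_toSet
      (fun x _ => (measurable_pi_apply x) (measurableSet_singleton true))
  rw [MeasureTheory.Measure.map_apply hphi_meas hcyl,
    MeasureTheory.Measure.restrict_apply' measurableSet_Ico]
  set AA : Finset (Fin n → Bool) := Fintype.piFinset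
    (fun i : Fin n => if (i : ℕ) ∈ S then ({true} : Finset Bool) else Finset.univ) with hAA
  have hmemAA : ∀ s : Fin n → Bool, s ∈ AA ↔ ∀ i : Fin n, (i : ℕ) ∈ S → s i = true := by
    intro s
    rw [hAA, Fintype.mem_piFinset]
    constructor
    · intro h i hi
      have := h i
      rw [if_pos hi] at this
      simpa using this
    · intro h i
      by_cases hi : (i : ℕ) ∈ S
      · rw [if_pos hi]
        simp [h i hi]
      · rw [if_neg hi]
        exact Finset.mem_univ _
  have hunion : (phi M) ⁻¹' {ξ : ℕ → Bool | ∀ x ∈ S, ξ x = true} ∩ Set.Ico (0:ℝ) 1 =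
      ⋃ s ∈ AA, Set.Ico (acum M n s) (acum M n s + wt M n s) := by
    ext t
    simp only [Set.mem_inter_iff, Set.mem_preimage, Set.mem_setOf_eq, Set.mem_iUnion]
    constructor
    · rintro ⟨hall, ht⟩
      refine ⟨sig M n t, ?_, ?_⟩
      · rw [hmemAA]
        intro i hi
        rw [sig_phi]
        exact hall i hi
      · rw [← sig_set_eq M h1 h2 n (sig M n t)]
        exact ⟨ht, rfl⟩
    · rintro ⟨s, hsAA, hts⟩
      rw [← sig_set_eq M h1 h2 n s] at hts
      refine ⟨?_, hts.1⟩
      intro x hx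
      have hxn : x < n := hS x hx
      have := (hmemAA s).1 hsAA ⟨x, hxn⟩ hx
      rw [← this, ← hts.2]
      exact (sig_phi M n t ⟨x, hxn⟩).symm
  rw [hunion]
  have hdisj : Set.PairwiseDisjoint (AA : Set (Fin n → Bool))
      (fun s => Set.Ico (acum M n s) (acum M n s + wt M n s)) := by
    intro s _ s' _ hne
    apply Set.disjoint_left.2
    intro t hts hts'
    have hts2 : t ∈ Set.Ico (acum M n s) (acum M n s + wt M n s) := hts
    have hts2' : t ∈ Set.Ico (acum M n s') (acum M n s' + wt M n s') := hts'
    rw [← sig_set_eq M h1 h2 n s] at hts2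
    rw [← sig_set_eq M h1 h2 n s'] at hts2'
    exact hne (hts2.2 ▸ hts2'.2)
  rw [MeasureTheory.measure_biUnion_finset hdisj (fun s _ => measurableSet_Ico)]
  have hvol : ∀ s ∈ AA, MeasureTheory.volume
      (Set.Ico (acum M n s) (acum M n s + wt M n s)) = ENNReal.ofReal (wt M n s) := by
    intro s _
    rw [Real.volume_Ico, add_sub_cancel_left]
  rw [Finset.sum_congr rfl hvol, ENNReal.toReal_sum (fun s _ => ENNReal.ofReal_ne_top)]
  have htoReal : ∀ s ∈ AA, (ENNReal.ofReal (wt M n s)).toReal = wt M n s := by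
    intro s _
    exact ENNReal.toReal_ofReal (wt_nonneg M h1 h2 n s)
  rw [Finset.sum_congr rfl htoReal, Complex.ofReal_sum]
  rw [← sum_dt M n S]
  apply Finset.sum_congr rfl
  intro s _
  exact (dt_eq_wt M h1 h2 n s).symm

end hyp

end DPP


namespace DPP

section transfer

open scoped Classical

variable {E : Type*} [DecidableEq E]

lemma inner_evec (x : E) (g : lp (fun _ : E => ℂ) 2) :
    (inner ℂ (evec x) g : ℂ) = g x := by
  rw [evec, lp.inner_single_left, RCLike.inner_apply]
  simp

lemma evec_apply (x y : E) : (evec x : lp (fun _ : E => ℂ) 2) y = if y = x then 1 else 0 := by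
  rw [evec, lp.single_apply]
  by_cases h : y = x <;> simp [h]

lemma inner_evec_evec (x y : E) :
    (inner ℂ (evec x) (evec y) : ℂ) = if x = y then 1 else 0 := by
  rw [inner_evec, evec_apply]

variable (f : E → ℕ)

open Classical in
/-- Extended basis vectors indexed by `ℕ`. -/
noncomputable def ee (i : ℕ) : lp (fun _ : E => ℂ) 2 :=
  if h : ∃ x, f x = i then evec h.choose else 0

variable (K : lp (fun _ : E => ℂ) 2 →L[ℂ] lp (fun _ : E => ℂ) 2)

/-- The extended kernel. -/
noncomputable def MK (i j : ℕ) : ℂ := inner ℂ (ee f i) (K (ee f j))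

lemma ee_f (hf : Function.Injective f) (x : E) : ee f (f x) = evec x := by
  have hmem : ∃ y, f y = f x := ⟨x, rfl⟩
  rw [ee, dif_pos hmem]
  exact congrArg evec (hf hmem.choose_spec)

lemma MK_f (hf : Function.Injective f) (x y : E) :
    MK f K (f x) (f y) = inner ℂ (evec x) (K (evec y)) := by
  rw [MK, ee_f f hf, ee_f f hf]

lemma inner_ee_ee (i j : ℕ) :
    (inner ℂ (ee f i) (ee f j) : ℂ) = if (i = j ∧ ∃ x, f x = i) then 1 else 0 := by
  rw [ee, ee]
  by_cases hi : ∃ x, f x = i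
  · by_cases hj : ∃ x, f x = j
    · rw [dif_pos hi, dif_pos hj, inner_evec_evec]
      by_cases hij : i = j
      · subst hij
        have hcc : hi.choose = hj.choose := by
          have h1 := hi.choose_spec
          have h2 := hj.choose_spec
          have : hi = hj := Subsingleton.elim _ _
          rw [this]
        simp [hcc, hi]
      · have hcc : hi.choose ≠ hj.choose := by
          intro hctr
          apply hij
          rw [← hi.choose_spec, ← hj.choose_spec, hctr]
        simp [hcc, hij]
    · rw [dif_pos hi, dif_neg hj, inner_zero_right]
      have : ¬(i = j ∧ ∃ x, f x = i) := fun h => hj (h.1 ▸ h.2)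
      rw [if_neg this]
  · rw [dif_neg hi, inner_zero_left]
    have : ¬(i = j ∧ ∃ x, f x = i) := fun h => hi h.2
    rw [if_neg this]

lemma quad (m : ℕ) (v : Fin m → ℂ) :
    dotProduct (star v) ((Matrix.of fun i j : Fin m => MK f K (i:ℕ) (j:ℕ)) *ᵥ v) =
      inner ℂ (∑ i : Fin m, v i • ee f (i:ℕ)) (K (∑ i : Fin m, v i • ee f (i:ℕ))) := by
  rw [map_sum, sum_inner]
  simp only [inner_smul_left, inner_sum, ContinuousLinearMap.map_smul, inner_smul_right]
  simp only [dotProduct, Matrix.mulVec, Matrix.of_apply, Pi.star_apply, RCLike.star_def,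
    MK]
  apply Finset.sum_congr rfl
  intro i _
  rw [Finset.mul_sum]
  apply Finset.sum_congr rfl
  intro j _
  ring

lemma quad_gg (m : ℕ) (v : Fin m → ℂ) :
    (inner ℂ (∑ i : Fin m, v i • ee f (i:ℕ)) (∑ i : Fin m, v i • ee f (i:ℕ)) : ℂ) =
      ∑ i : Fin m, (if ∃ x, f x = (i:ℕ) then ((Complex.normSq (v i) : ℝ) : ℂ) else 0) := by
  rw [sum_inner]
  simp only [inner_smul_left, inner_sum, inner_smul_right, inner_ee_ee]
  apply Finset.sum_congr rfl
  intro i _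
  rw [Finset.sum_eq_single i]
  · by_cases hex : ∃ x, f x = (i:ℕ)
    · rw [if_pos ⟨rfl, hex⟩, if_pos hex, mul_one, Complex.mul_conj]
    · rw [if_neg (fun h => hex h.2), if_neg hex]
      ring
  · intro j _ hji
    have : ¬((i:ℕ) = (j:ℕ) ∧ ∃ x, f x = (i:ℕ)) := by
      rintro ⟨hij, -⟩
      exact hji (Fin.ext hij.symm)
    rw [if_neg this]
    ring
  · intro h
    exact absurd (Finset.mem_univ i) h

variable (hsa : ∀ g g' : lp (fun _ : E => ℂ) 2, (inner ℂ (K g) g' : ℂ) = inner ℂ g (K g'))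

include hsa in
lemma inner_K_real (g : lp (fun _ : E => ℂ) 2) : (inner ℂ g (K g) : ℂ).im = 0 := by
  rw [← Complex.conj_eq_iff_im]
  rw [inner_conj_symm, hsa]

include hsa in
lemma MK_psd (hpos : ∀ g : lp (fun _ : E => ℂ) 2, 0 ≤ (inner ℂ g (K g) : ℂ).re) (m : ℕ) :
    (Matrix.of fun i j : Fin m => MK f K (i:ℕ) (j:ℕ)).PosSemidef := by
  refine Matrix.PosSemidef.of_dotProduct_mulVec_nonneg ?_ ?_
  · ext i j
    rw [Matrix.conjTranspose_apply, Matrix.of_apply, Matrix.of_apply, RCLike.star_def, MK, MK,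
      inner_conj_symm, hsa]
  · intro v
    rw [quad]
    rw [Complex.nonneg_iff]
    exact ⟨hpos _, (inner_K_real K hsa _).symm⟩

include hsa in
lemma MK_one_sub_psd
    (hpos : ∀ g : lp (fun _ : E => ℂ) 2, 0 ≤ (inner ℂ g (K g) : ℂ).re)
    (hle : ∀ g : lp (fun _ : E => ℂ) 2, (inner ℂ g (K g) : ℂ).re ≤ (inner ℂ g g : ℂ).re)
    (m : ℕ) :
    ((1 : Matrix (Fin m) (Fin m) ℂ) -
      Matrix.of fun i j : Fin m => MK f K (i:ℕ) (j:ℕ)).PosSemidef := by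
  refine Matrix.PosSemidef.of_dotProduct_mulVec_nonneg ?_ ?_
  · exact Matrix.isHermitian_one.sub (MK_psd f K hsa hpos m).1
  · intro v
    rw [Matrix.sub_mulVec, dotProduct_sub, Matrix.one_mulVec, quad]
    set g : lp (fun _ : E => ℂ) 2 := ∑ i : Fin m, v i • ee f (i:ℕ) with hg
    have hvv : dotProduct (star v) v = ((∑ i : Fin m, Complex.normSq (v i) : ℝ) : ℂ) := by
      push_cast
      simp only [dotProduct, Pi.star_apply, RCLike.star_def]
      apply Finset.sum_congr rfl
      intro i _
      rw [mul_comm ((starRingEnd ℂ) (v i)) (v i), Complex.mul_conj]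
    have hggre : (inner ℂ g g : ℂ).re ≤ ∑ i : Fin m, Complex.normSq (v i) := by
      rw [hg, quad_gg]
      rw [Complex.re_sum]
      apply Finset.sum_le_sum
      intro i _
      by_cases hex : ∃ x, f x = (i:ℕ)
      · rw [if_pos hex]
        simp
      · rw [if_neg hex]
        simp [Complex.normSq_nonneg]
    rw [hvv, Complex.nonneg_iff]
    constructor
    · rw [Complex.sub_re, Complex.ofReal_re]
      have := hle g
      linarith [hggre]
    · rw [Complex.sub_im, Complex.ofReal_im, inner_K_real K hsa g]
      ring

end transfer

end DPP


/-- **Existence and uniqueness of the determinantal point process.**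
Let `E` be a countable set and `K` a bounded self-adjoint operator on `l²(E)` with
`0 ≤ K ≤ I`.  Then there is a unique probability measure `μ` on `X = {0,1}^E` (with the
product σ-algebra) such that for every nonempty finite `S = {x₁,…,xₙ} ⊆ E`,
`μ {ξ : S ⊆ ξ} = det (K(xᵢ,xⱼ))`, where `K(x,y) = ⟨e_x, K e_y⟩`. -/
theorem statement0 {E : Type*} [Countable E] [DecidableEq E]
    (K : lp (fun _ : E => ℂ) 2 →L[ℂ] lp (fun _ : E => ℂ) 2)
    (hsa : ∀ f g : lp (fun _ : E => ℂ) 2, (inner ℂ (K f) g : ℂ) = inner ℂ f (K g))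
    (hpos : ∀ f : lp (fun _ : E => ℂ) 2, 0 ≤ (inner ℂ f (K f) : ℂ).re)
    (hle : ∀ f : lp (fun _ : E => ℂ) 2, (inner ℂ f (K f) : ℂ).re ≤ (inner ℂ f f : ℂ).re) :
    ∃! μ : Measure (E → Bool),
      IsProbabilityMeasure μ ∧
      ∀ S : Finset E, S.Nonempty →
        ((μ {ξ : E → Bool | ∀ x ∈ S, ξ x = true}).toReal : ℂ) =
          Matrix.det (Matrix.of fun i j : S =>
            (inner ℂ (evec (i : E)) (K (evec (j : E))) : ℂ)) := by
  classical
  obtain ⟨f, hf⟩ := Countable.exists_injective_nat E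
  have h1 := DPP.MK_psd f K hsa hpos
  have h2 := DPP.MK_one_sub_psd f K hsa hpos hle
  obtain ⟨μ0, hμ0prob, hμ0⟩ := DPP.core (DPP.MK f K) h1 h2
  set cmap : (ℕ → Bool) → (E → Bool) := fun ξ x => ξ (f x) with hcmap
  have hcmeas : Measurable cmap :=
    measurable_pi_lambda _ fun x => measurable_pi_apply (f x)
  set μ : Measure (E → Bool) := μ0.map cmap with hμ
  have hμprob : IsProbabilityMeasure μ := Measure.isProbabilityMeasure_map hcmeas.aemeasurable
  have hcylE : ∀ S : Finset E, MeasurableSet {ξ : E → Bool | ∀ x ∈ S, ξ x = true} := by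
    intro S
    have hset : {ξ : E → Bool | ∀ x ∈ S, ξ x = true} =
        ⋂ x ∈ (S : Set E), (fun ξ : E → Bool => ξ x) ⁻¹' {true} := by
      ext ξ
      simp
    rw [hset]
    exact MeasurableSet.biInter S.countable_toSet
      fun x _ => (measurable_pi_apply x) (measurableSet_singleton true)
  have hprop : ∀ S : Finset E, S.Nonempty →
      ((μ {ξ : E → Bool | ∀ x ∈ S, ξ x = true}).toReal : ℂ) =
        Matrix.det (Matrix.of fun i j : S =>
          (inner ℂ (evec (i : E)) (K (evec (j : E))) : ℂ)) := by
    intro S _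
    set n : ℕ := (S.image f).sup id + 1 with hn
    have hSn : ∀ i ∈ S.image f, i < n :=
      fun i hi => Nat.lt_succ_of_le (Finset.le_sup (f := id) hi)
    have hxn : ∀ x ∈ S, f x < n := fun x hx => hSn _ (Finset.mem_image_of_mem f hx)
    have hpre : cmap ⁻¹' {ξ : E → Bool | ∀ x ∈ S, ξ x = true} =
        {ξ : ℕ → Bool | ∀ i ∈ S.image f, ξ i = true} := by
      ext ξ
      simp only [Set.mem_preimage, Set.mem_setOf_eq, hcmap]
      exact Iff.symm Finset.forall_mem_image
    rw [hμ, Measure.map_apply hcmeas (hcylE S), hpre, hμ0 n (S.image f) hSn]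
    have hinj : Function.Injective
        (fun x : ↥S => (⟨⟨f x, hxn x x.2⟩, Finset.mem_image_of_mem f x.2⟩ :
          {i : Fin n // (i : ℕ) ∈ S.image f})) := by
      intro x y hxy
      apply Subtype.ext
      apply hf
      simpa using congrArg (fun z : {i : Fin n // (i : ℕ) ∈ S.image f} =>
        ((z : Fin n) : ℕ)) hxy
    have hsurj : Function.Surjective
        (fun x : ↥S => (⟨⟨f x, hxn x x.2⟩, Finset.mem_image_of_mem f x.2⟩ :
          {i : Fin n // (i : ℕ) ∈ S.image f})) := by
      rintro ⟨⟨i, hi⟩, him⟩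
      obtain ⟨x, hxS, hfx⟩ := Finset.mem_image.1 him
      exact ⟨⟨x, hxS⟩, by apply Subtype.ext; apply Fin.ext; exact hfx⟩
    set e : ↥S ≃ {i : Fin n // (i : ℕ) ∈ S.image f} :=
      Equiv.ofBijective _ ⟨hinj, hsurj⟩ with he
    rw [← Matrix.det_submatrix_equiv_self e
      (Matrix.of fun i j : {i : Fin n // (i : ℕ) ∈ S.image f} =>
        DPP.MK f K ((i : Fin n) : ℕ) ((j : Fin n) : ℕ))]
    congr 1
    ext x y
    simp only [Matrix.submatrix_apply, Matrix.of_apply, he, Equiv.ofBijective_apply]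
    exact DPP.MK_f f K hf x y
  refine ⟨μ, ⟨hμprob, hprop⟩, ?_⟩
  rintro ν ⟨hνprob, hνprop⟩
  set C : Set (Set (E → Bool)) :=
    {A | ∃ S : Finset E, A = {ξ : E → Bool | ∀ x ∈ S, ξ x = true}} with hC
  have hpi : IsPiSystem C := by
    rintro A ⟨S, rfl⟩ B ⟨S', rfl⟩ -
    refine ⟨S ∪ S', ?_⟩
    ext ξ
    simp only [Set.mem_inter_iff, Set.mem_setOf_eq, Finset.mem_union, or_imp, forall_and]
  have hgen : (inferInstance : MeasurableSpace (E → Bool)) =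
      MeasurableSpace.generateFrom C := by
    apply le_antisymm
    · refine iSup_le fun x => ?_
      rintro A ⟨s, -, rfl⟩
      have hset : (fun ξ : E → Bool => ξ x) ⁻¹' s = ⋃ b ∈ s, {ξ : E → Bool | ξ x = b} := by
        ext ξ
        simp only [Set.mem_preimage, Set.mem_iUnion, Set.mem_setOf_eq]
        constructor
        · intro h
          exact ⟨ξ x, h, rfl⟩
        · rintro ⟨b, hb, hxb⟩
          rw [hxb]
          exact hb
      rw [hset]
      refine MeasurableSet.biUnion (Set.to_countable s) fun b _ => ?_
      have htrue : MeasurableSet[MeasurableSpace.generateFrom C] {ξ : E → Bool | ξ x = true} := by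
        apply MeasurableSpace.measurableSet_generateFrom
        refine ⟨{x}, ?_⟩
        ext ξ
        simp
      cases b
      · have hfalse : {ξ : E → Bool | ξ x = false} = {ξ : E → Bool | ξ x = true}ᶜ := by
          ext ξ
          simp
        rw [hfalse]
        exact htrue.compl
      · exact htrue
    · apply MeasurableSpace.generateFrom_le
      rintro A ⟨S, rfl⟩
      exact hcylE S
  have heq : ∀ A ∈ C, ν A = μ A := by
    rintro A ⟨S, rfl⟩
    rcases S.eq_empty_or_nonempty with rfl | hS
    · have huniv : {ξ : E → Bool | ∀ x ∈ (∅ : Finset E), ξ x = true} = Set.univ := by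
        ext ξ
        simp
      rw [huniv, measure_univ, measure_univ]
    · have hcast : ((ν {ξ : E → Bool | ∀ x ∈ S, ξ x = true}).toReal : ℂ) =
          ((μ {ξ : E → Bool | ∀ x ∈ S, ξ x = true}).toReal : ℂ) :=
        (hνprop S hS).trans (hprop S hS).symm
      have hr : (ν {ξ : E → Bool | ∀ x ∈ S, ξ x = true}).toReal =
          (μ {ξ : E → Bool | ∀ x ∈ S, ξ x = true}).toReal := by
        exact_mod_cast hcast
      exact (ENNReal.toReal_eq_toReal_iff' (measure_ne_top ν _) (measure_ne_top μ _)).1 hr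
  exact ext_of_generate_finite C hgen hpi heq (by rw [measure_univ, measure_univ])
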